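/- Let k be a field of characteristic p > 0, G a finite p-group, and V a finite-dimensional kG-module. Then V is a free kG-module if and only if tr(V) = V^G, where tr(v) = Σ_{g∈G} v·g. -/

import Mathlib

open MonoidAlgebra

namespace FreeTraceAux

section Basic

variable (k : Type*) [Field k] (G : Type*) [Group G] [Fintype G]

noncomputable def NN : MonoidAlgebra k G := ∑ g : G, of k G g

variable {k G}

lemma NN_apply (h : G) : (NN k G).coeff h = 1 := by
  classical
  rw [NN]
  simp only [MonoidAlgebra.of_apply]
  rw [MonoidAlgebra.coeff_sum, Finsupp.finset_sum_apply]
  simp [MonoidAlgebra.single_apply]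

lemma NN_ne_zero : NN k G ≠ 0 := by
  intro h
  have := NN_apply (k := k) (G := G) 1
  rw [h] at this
  simp at this

lemma of_mul_NN (g : G) : of k G g * NN k G = NN k G := by
  rw [NN, Finset.mul_sum]
  exact Fintype.sum_equiv (Equiv.mulLeft g) _ _ (fun h => by simp [← map_mul])

lemma NN_mul_of (g : G) : NN k G * of k G g = NN k G := by
  rw [NN, Finset.sum_mul]
  exact Fintype.sum_equiv (Equiv.mulRight g) _ _ (fun h => by simp [← map_mul])

lemma fixed_left {x : MonoidAlgebra k G} (hx : ∀ g : G, of k G g * x = x) :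
    x = x.coeff 1 • NN k G := by
  ext h
  rw [MonoidAlgebra.coeff_smul_apply, NN_apply, smul_eq_mul, mul_one]
  have h1 : (of k G h * x).coeff h = x.coeff h := by rw [hx h]
  rw [MonoidAlgebra.of_apply, MonoidAlgebra.coeff_single_mul_apply, one_mul, inv_mul_cancel] at h1
  exact h1.symm

lemma fixed_right {x : MonoidAlgebra k G} (hx : ∀ g : G, x * of k G g = x) :
    x = x.coeff 1 • NN k G := by
  ext h
  rw [MonoidAlgebra.coeff_smul_apply, NN_apply, smul_eq_mul, mul_one]
  have h1 : (x * of k G h).coeff h = x.coeff h := by rw [hx h]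
  rw [MonoidAlgebra.of_apply, MonoidAlgebra.coeff_mul_single_apply, mul_one, mul_inv_cancel] at h1
  exact h1.symm

noncomputable def aug : MonoidAlgebra k G →ₐ[k] k := MonoidAlgebra.lift k k G 1

lemma aug_single (g : G) (c : k) : aug (MonoidAlgebra.single g c) = c := by
  simp [aug]

lemma mul_NN (x : MonoidAlgebra k G) : x * NN k G = aug x • NN k G := by
  induction x using MonoidAlgebra.induction_linear with
  | zero => simp
  | add f g hf hg => rw [add_mul, hf, hg, map_add, add_smul]
  | single g c =>
      show (MonoidAlgebra.single g c) * NN k G = aug (MonoidAlgebra.single g c) • NN k G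
      rw [aug_single,
        show (MonoidAlgebra.single g c : MonoidAlgebra k G) = c • of k G g from by
          rw [MonoidAlgebra.of_apply, MonoidAlgebra.smul_single, smul_eq_mul, mul_one],
        smul_mul_assoc, of_mul_NN]

lemma sum_of_inv : (∑ g : G, of k G g⁻¹) = NN k G := by
  rw [NN]
  exact Fintype.sum_equiv (Equiv.inv G) _ _ (fun h => by simp)

end Basic


section Fixed

variable {p : ℕ} [Fact p.Prime] {k : Type*} [Field k] [CharP k p]
  {G : Type*} [Group G] [Fintype G]

lemma exists_fixed (hG : IsPGroup p G) {M : Type*} [AddCommGroup M] [Module k M]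
    (ρ : G →* Module.End k M) {m₀ : M} (hm₀ : m₀ ≠ 0) :
    ∃ m : M, m ≠ 0 ∧ ∀ g : G, ρ g m = m := by
  classical
  have hchar : ∀ x : M, p • x = 0 := fun x => by
    rw [← Nat.cast_smul_eq_nsmul k, CharP.cast_eq_zero, zero_smul]
  haveI : NeZero p := ⟨(Fact.out : p.Prime).ne_zero⟩
  haveI : Module (ZMod p) M := AddCommGroup.zmodModule hchar
  set s : Set M := Set.range (fun g : G => ρ g m₀) with hs
  have hsfin : s.Finite := Set.finite_range _
  set W : Submodule (ZMod p) M := Submodule.span (ZMod p) s with hW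
  haveI : Module.Finite (ZMod p) W := Module.Finite.span_of_finite (ZMod p) hsfin
  haveI : Finite W := Module.finite_of_finite (ZMod p)
  have hmem : ∀ (g : G) (x : M), x ∈ W → ρ g x ∈ W := by
    intro g x hx
    induction hx using Submodule.span_induction with
    | mem y hy =>
        obtain ⟨h, rfl⟩ := hy
        exact Submodule.subset_span ⟨g * h, show ρ (g*h) m₀ = ρ g (ρ h m₀) by rw [map_mul]; rfl⟩
    | zero => simp only [map_zero]; exact W.zero_mem
    | add a b _ _ ha hb => rw [map_add]; exact W.add_mem ha hb
    | smul c a _ ha => rw [ZMod.map_smul]; exact W.smul_mem c ha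
  letI : MulAction G W :=
    { smul := fun g w => ⟨ρ g w, hmem g w w.2⟩
      one_smul := fun w => Subtype.ext (show ρ 1 (w : M) = w by rw [map_one]; rfl)
      mul_smul := fun g h w =>
        Subtype.ext (show ρ (g * h) (w : M) = ρ g (ρ h (w : M)) by rw [map_mul]; rfl) }
  have hsmul_def : ∀ (g : G) (w : W), ((g • w : W) : M) = ρ g (w : M) := fun _ _ => rfl
  have h0fix : (0 : W) ∈ MulAction.fixedPoints G W := by
    intro g
    apply Subtype.ext
    rw [hsmul_def]
    simp
  have hm₀W : m₀ ∈ W := Submodule.subset_span ⟨1, by simp⟩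
  haveI : Nontrivial W := ⟨⟨⟨m₀, hm₀W⟩, 0, by simp [Subtype.ext_iff, hm₀]⟩⟩
  have hdvd : p ∣ Nat.card W := by
    haveI : Fintype W := Fintype.ofFinite W
    rw [Nat.card_eq_fintype_card, Module.card_eq_pow_finrank (K := ZMod p) (V := W), ZMod.card]
    exact dvd_pow_self p (Module.finrank_pos (R := ZMod p) (M := W)).ne'
  obtain ⟨b, hbfix, hb0⟩ := hG.exists_fixed_point_of_prime_dvd_card_of_fixed_point W hdvd h0fix
  refine ⟨(b : M), ?_, fun g => ?_⟩
  · intro hb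
    exact hb0 (Subtype.ext hb.symm)
  · have := hbfix g
    have h2 := congrArg (Subtype.val) this
    rwa [hsmul_def] at h2

end Fixed
section Ideals

variable {p : ℕ} [Fact p.Prime] {k : Type*} [Field k] [CharP k p]
  {G : Type*} [Group G] [Fintype G]

/-- Every nonzero left ideal of `k[G]` contains `NN`. -/
lemma NN_mem_of_ne_bot (hG : IsPGroup p G)
    {J : Submodule (MonoidAlgebra k G) (MonoidAlgebra k G)} (hJ : J ≠ ⊥) :
    NN k G ∈ J := by
  obtain ⟨x, hxJ, hx0⟩ := Submodule.exists_mem_ne_zero_of_ne_bot hJ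
  let ρ : G →* Module.End k ↥J :=
    { toFun := fun g =>
        { toFun := fun z => ⟨of k G g * (z : MonoidAlgebra k G), by
            simpa [smul_eq_mul] using J.smul_mem (of k G g) z.2⟩
          map_add' := fun a b => Subtype.ext (by simp [mul_add])
          map_smul' := fun c a => Subtype.ext (by simp [Algebra.mul_smul_comm]) }
      map_one' := LinearMap.ext fun z => Subtype.ext
        (show of k G 1 * (z : MonoidAlgebra k G) = z by rw [map_one, one_mul])
      map_mul' := fun g h => LinearMap.ext fun z => Subtype.ext
        (show of k G (g * h) * (z : MonoidAlgebra k G)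
            = of k G g * (of k G h * (z : MonoidAlgebra k G)) by
          rw [map_mul, mul_assoc]) }
  obtain ⟨m, hm0, hmfix⟩ := exists_fixed hG ρ (m₀ := ⟨x, hxJ⟩)
    (fun h => hx0 (by simpa [Subtype.ext_iff] using h))
  have hfix' : ∀ g : G, of k G g * (m : MonoidAlgebra k G) = (m : MonoidAlgebra k G) :=
    fun g => congrArg Subtype.val (hmfix g)
  have hm_eq := fixed_left hfix'
  set c : k := (m : MonoidAlgebra k G).coeff 1 with hc
  have hc0 : c ≠ 0 := by
    intro h
    apply hm0
    apply Subtype.ext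
    rw [hm_eq, h, zero_smul]
    simp
  have : NN k G = c⁻¹ • (m : MonoidAlgebra k G) := by
    rw [hm_eq, smul_smul, inv_mul_cancel₀ hc0, one_smul]
  rw [this]
  exact J.smul_of_tower_mem c⁻¹ m.2

lemma exists_right_inv (hG : IsPGroup p G) {x : MonoidAlgebra k G} (hx : aug x ≠ 0) :
    ∃ y, x * y = 1 := by
  have hL : Function.Injective (LinearMap.mulLeft k x) := by
    rw [← LinearMap.ker_eq_bot]
    by_contra hker
    obtain ⟨z, hzA, hz0⟩ := Submodule.exists_mem_ne_zero_of_ne_bot hker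
    let A := LinearMap.ker (LinearMap.mulLeft k x)
    have hAmem : ∀ (g : G) (w : MonoidAlgebra k G), w ∈ A → w * of k G g ∈ A := by
      intro g w hw
      have hw' : x * w = 0 := hw
      show x * (w * of k G g) = 0
      rw [← mul_assoc, hw', zero_mul]
    let ρ : G →* Module.End k ↥A :=
      { toFun := fun g =>
          { toFun := fun z => ⟨(z : MonoidAlgebra k G) * of k G g⁻¹, hAmem g⁻¹ _ z.2⟩
            map_add' := fun a b => Subtype.ext (by simp [add_mul])
            map_smul' := fun c a => Subtype.ext (by simp [Algebra.smul_mul_assoc]) }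
        map_one' := LinearMap.ext fun z => Subtype.ext
          (show (z : MonoidAlgebra k G) * of k G (1 : G)⁻¹ = z by
            rw [inv_one, map_one, mul_one])
        map_mul' := fun g h => LinearMap.ext fun z => Subtype.ext
          (show (z : MonoidAlgebra k G) * of k G (g * h)⁻¹
              = ((z : MonoidAlgebra k G) * of k G h⁻¹) * of k G g⁻¹ by
            rw [mul_inv_rev, map_mul, mul_assoc]) }
    obtain ⟨m, hm0, hmfix⟩ := exists_fixed hG ρ (m₀ := ⟨z, hzA⟩)
      (fun h => hz0 (by simpa [Subtype.ext_iff] using h))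
    have hfix' : ∀ g : G, (m : MonoidAlgebra k G) * of k G g = (m : MonoidAlgebra k G) := by
      intro g
      have h2 : (m : MonoidAlgebra k G) * of k G (g⁻¹)⁻¹ = (m : MonoidAlgebra k G) :=
        congrArg Subtype.val (hmfix g⁻¹)
      rwa [inv_inv] at h2
    have hm_eq := fixed_right hfix'
    have hc0 : (m : MonoidAlgebra k G).coeff 1 ≠ 0 := by
      intro h
      apply hm0
      apply Subtype.ext
      rw [hm_eq, h, zero_smul]
      simp
    have hmA : x * (m : MonoidAlgebra k G) = 0 := m.2
    have h3 : x * (((m : MonoidAlgebra k G).coeff 1) • NN k G) = 0 := by rw [← hm_eq]; exact hmA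
    rw [Algebra.mul_smul_comm] at h3
    rcases smul_eq_zero.mp h3 with h | h
    · exact hc0 h
    · rw [mul_NN] at h
      rcases smul_eq_zero.mp h with h' | h'
      · exact hx h'
      · exact NN_ne_zero h'
  haveI : FiniteDimensional k (MonoidAlgebra k G) :=
    inferInstance
  obtain ⟨y, hy⟩ := (LinearMap.injective_iff_surjective).mp hL 1
  exact ⟨y, hy⟩

end Ideals
section Modules

variable {p : ℕ} [Fact p.Prime] {k : Type*} [Field k] [CharP k p]
  {G : Type*} [Group G] [Fintype G]
  {V : Type*} [AddCommGroup V] [Module k V] [Module (MonoidAlgebra k G) V]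
  [IsScalarTower k (MonoidAlgebra k G) V]

lemma smul_comm' (c : k) (r : MonoidAlgebra k G) (u : V) : r • c • u = c • r • u := by
  rw [← algebraMap_smul (MonoidAlgebra k G) c u, ← mul_smul, ← Algebra.commutes, mul_smul,
    algebraMap_smul]

/-- The action of `G` on `V` as a monoid hom to `k`-linear endomorphisms. -/
noncomputable def rhoV (k : Type*) [Field k] (G : Type*) [Group G] [Fintype G]
    (V : Type*) [AddCommGroup V] [Module k V] [Module (MonoidAlgebra k G) V]
    [IsScalarTower k (MonoidAlgebra k G) V] : G →* Module.End k V :=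
  { toFun := fun g =>
      { toFun := fun u => of k G g • u
        map_add' := fun a b => smul_add _ a b
        map_smul' := fun c u => smul_comm' c (of k G g) u }
    map_one' := LinearMap.ext fun u => show of k G 1 • u = u by rw [map_one, one_smul]
    map_mul' := fun g h => LinearMap.ext fun u =>
      show of k G (g * h) • u = of k G g • of k G h • u by rw [map_mul, mul_smul] }

lemma forward [FiniteDimensional k V] [Module.Free (MonoidAlgebra k G) V] :
    (Set.range (fun v : V => NN k G • v) = {x : V | ∀ g : G, of k G g • x = x}) := by
  apply Set.Subset.antisymm
  · rintro _ ⟨u, rfl⟩ g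
    show of k G g • (NN k G • u) = NN k G • u
    rw [← mul_smul, of_mul_NN]
  · intro x hx
    haveI : Module.Finite (MonoidAlgebra k G) V :=
      Module.Finite.of_restrictScalars_finite k _ _
    let b := Module.Free.chooseBasis (MonoidAlgebra k G) V
    have hcoord : ∀ i, ∀ g : G, of k G g * (b.repr x i) = b.repr x i := by
      intro i g
      calc of k G g * (b.repr x i) = (of k G g • b.repr x) i := rfl
        _ = (b.repr (of k G g • x)) i := by rw [map_smul]
        _ = b.repr x i := by rw [hx g]
    refine ⟨∑ i, ((b.repr x i).coeff 1) • b i, ?_⟩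
    show NN k G • (∑ i, ((b.repr x i).coeff 1) • b i) = x
    rw [Finset.smul_sum]
    have : ∀ i, NN k G • (((b.repr x i).coeff 1) • b i) = (b.repr x i) • b i := by
      intro i
      rw [smul_comm', ← smul_assoc]
      exact congrArg (· • b i) (fixed_left (hcoord i)).symm
    rw [Finset.sum_congr rfl (fun i _ => this i)]
    exact b.sum_repr x

end Modules
section Converse

universe uv

variable {p : ℕ} [Fact p.Prime] {k : Type*} [Field k] [CharP k p]
  {G : Type*} [Group G] [Fintype G]

lemma converse (hG : IsPGroup p G) : ∀ (n : ℕ) (V : Type uv) [AddCommGroup V] [Module k V]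
    [Module (MonoidAlgebra k G) V] [IsScalarTower k (MonoidAlgebra k G) V]
    [FiniteDimensional k V], Module.finrank k V = n →
    (Set.range (fun v : V => NN k G • v) = {x : V | ∀ g : G, of k G g • x = x}) →
    Module.Free (MonoidAlgebra k G) V := by
  intro n
  induction n using Nat.strong_induction_on with
  | _ n ih =>
    intro V _ _ _ _ _ hn hyp
    by_cases hV : Subsingleton V
    · exact Module.Free.of_subsingleton (MonoidAlgebra k G) V
    · rw [not_subsingleton_iff_nontrivial] at hV
      obtain ⟨v₀, hv₀⟩ := exists_ne (0 : V)
      obtain ⟨x, hx0, hxfix⟩ := exists_fixed hG (rhoV k G V) hv₀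
      have hxmem : x ∈ Set.range (fun v : V => NN k G • v) := by
        rw [hyp]; exact fun g => hxfix g
      obtain ⟨v, hv⟩ := hxmem
      have hNv : NN k G • v ≠ 0 := by rw [show NN k G • v = x from hv]; exact hx0
      -- a functional with value 1 on `NN • v`
      obtain ⟨φ₀, hφ₀⟩ : ∃ φ : Module.Dual k V, φ (NN k G • v) ≠ 0 := by
        by_contra hcon
        push_neg at hcon
        exact hNv ((Module.forall_dual_apply_eq_zero_iff k _).mp hcon)
      set lam : V →ₗ[k] k := (φ₀ (NN k G • v))⁻¹ • φ₀ with hlamdef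
      have hlam : lam (NN k G • v) = 1 := by
        rw [hlamdef]
        simp only [LinearMap.smul_apply, smul_eq_mul]
        exact inv_mul_cancel₀ hφ₀
      -- the k-linear map θ
      set θ : V →ₗ[k] MonoidAlgebra k G :=
        { toFun := fun u => ∑ g : G, MonoidAlgebra.single g (lam (of k G g⁻¹ • u))
          map_add' := by
            intro a b
            rw [← Finset.sum_add_distrib]
            refine Finset.sum_congr rfl fun g _ => ?_
            rw [smul_add, map_add, MonoidAlgebra.single_add]
          map_smul' := by
            intro c u
            rw [RingHom.id_apply, Finset.smul_sum]
            refine Finset.sum_congr rfl fun g _ => ?_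
            rw [smul_comm', map_smul, MonoidAlgebra.smul_single] } with hθdef
      have hθ_apply : ∀ u : V, θ u = ∑ g : G, MonoidAlgebra.single g (lam (of k G g⁻¹ • u)) :=
        fun u => rfl
      have hθ_of : ∀ (h : G) (u : V), θ (of k G h • u) = of k G h * θ u := by
        intro h u
        rw [hθ_apply, hθ_apply, Finset.mul_sum]
        refine (Fintype.sum_equiv (Equiv.mulLeft h)
          (fun g => of k G h * MonoidAlgebra.single g (lam (of k G g⁻¹ • u)))
          (fun g => MonoidAlgebra.single g (lam (of k G g⁻¹ • (of k G h • u)))) ?_).symm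
        intro g
        show of k G h * MonoidAlgebra.single g (lam (of k G g⁻¹ • u))
          = MonoidAlgebra.single (h * g) (lam (of k G (h * g)⁻¹ • (of k G h • u)))
        have harg : of k G (h * g)⁻¹ • (of k G h • u) = of k G g⁻¹ • u := by
          rw [← mul_smul, ← map_mul, mul_inv_rev, mul_assoc, inv_mul_cancel, mul_one]
        rw [harg, MonoidAlgebra.of_apply, MonoidAlgebra.single_mul_single, one_mul]
      have hθ_smul : ∀ (r : MonoidAlgebra k G) (u : V), θ (r • u) = r * θ u := by
        intro r u
        induction r using MonoidAlgebra.induction_on with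
        | of g => exact hθ_of g u
        | add f g hf hg => rw [add_smul, map_add, hf, hg, add_mul]
        | smul c f hf => rw [smul_assoc, map_smul, hf, smul_mul_assoc]
      -- aug (θ v) = 1
      have haug : aug (θ v) = 1 := by
        rw [hθ_apply, map_sum]
        have : ∀ g : G, aug (MonoidAlgebra.single g (lam (of k G g⁻¹ • v)))
            = lam (of k G g⁻¹ • v) := fun g => aug_single _ _
        rw [Finset.sum_congr rfl (fun g _ => this g), ← map_sum lam _ Finset.univ]
        have h2 : (∑ g : G, of k G g⁻¹ • v) = NN k G • v := by
          rw [← Finset.sum_smul, sum_of_inv]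
        rw [h2, hlam]
      obtain ⟨y, hy⟩ := exists_right_inv hG (x := θ v) (by rw [haug]; exact one_ne_zero)
      -- the R-linear projection π
      set π : V →ₗ[MonoidAlgebra k G] MonoidAlgebra k G :=
        { toFun := fun u => θ u * y
          map_add' := fun a b => by
            show θ (a + b) * y = θ a * y + θ b * y
            rw [map_add, add_mul]
          map_smul' := fun r u => by
            show θ (r • u) * y = r • (θ u * y)
            rw [hθ_smul, smul_eq_mul, mul_assoc] } with hπdef
      have hπ_apply : ∀ u : V, π u = θ u * y := fun u => rfl
      have hπv : π v = 1 := by rw [hπ_apply, hy]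
      have hπ_smulv : ∀ r : MonoidAlgebra k G, π (r • v) = r := by
        intro r
        rw [map_smul, hπv]
        show r * 1 = r
        rw [mul_one]
      -- the kernel submodule
      set K := LinearMap.ker π with hK
      haveI : FiniteDimensional k ↥K := FiniteDimensional.of_injective
        ((K.subtype).restrictScalars k) Subtype.val_injective
      -- the equivalence V ≃ K × R
      set l : V →ₗ[MonoidAlgebra k G] ↥K × MonoidAlgebra k G :=
        LinearMap.prod
          { toFun := fun u => (⟨u - π u • v, by
              rw [LinearMap.mem_ker, map_sub, map_smul, hπv]
              show π u - π u * 1 = 0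
              rw [mul_one, sub_self]⟩ : ↥K)
            map_add' := fun a b => Subtype.ext (by
              show (a + b) - π (a + b) • v = (a - π a • v) + (b - π b • v)
              rw [map_add, add_smul]
              abel)
            map_smul' := fun r u => Subtype.ext (by
              show r • u - π (r • u) • v = r • (u - π u • v)
              rw [map_smul, smul_sub, ← mul_smul]
              rfl) }
          π with hldef
      set l₂ : ↥K × MonoidAlgebra k G →ₗ[MonoidAlgebra k G] V :=
        K.subtype.comp (LinearMap.fst _ _ _)
          + (LinearMap.toSpanSingleton (MonoidAlgebra k G) V v).comp (LinearMap.snd _ _ _)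
        with hl₂def
      have hl₂_apply : ∀ (w : ↥K) (r : MonoidAlgebra k G), l₂ (w, r) = (w : V) + r • v :=
        fun w r => rfl
      have h21 : ∀ u : V, l₂ (l u) = u := by
        intro u
        show ((u - π u • v) + π u • v) = u
        rw [sub_add_cancel]
      have h12 : ∀ z : ↥K × MonoidAlgebra k G, l (l₂ z) = z := by
        rintro ⟨w, r⟩
        have hπw : π (w : V) = 0 := w.2
        have hπz : π ((w : V) + r • v) = r := by
          rw [map_add, hπw, hπ_smulv, zero_add]
        refine Prod.ext ?_ ?_
        · apply Subtype.ext
          show ((w : V) + r • v) - π ((w : V) + r • v) • v = (w : V)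
          rw [hπz, add_sub_cancel_right]
        · show π ((w : V) + r • v) = r
          exact hπz
      set e : V ≃ₗ[MonoidAlgebra k G] ↥K × MonoidAlgebra k G :=
        LinearEquiv.ofLinear l l₂ (LinearMap.ext h12) (LinearMap.ext h21) with hedef
      -- dimension count
      haveI : FiniteDimensional k (MonoidAlgebra k G) :=
        inferInstance
      have hdim : Module.finrank k V = Module.finrank k ↥K + Module.finrank k (MonoidAlgebra k G) := by
        rw [(e.restrictScalars k).finrank_eq]
        exact Module.finrank_prod
      have hRpos : 0 < Module.finrank k (MonoidAlgebra k G) :=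
        Module.finrank_pos
      have hKlt : Module.finrank k ↥K < n := by omega
      -- the hypothesis for K
      have hypK : Set.range (fun w : ↥K => NN k G • w)
          = {x' : ↥K | ∀ g : G, of k G g • x' = x'} := by
        apply Set.Subset.antisymm
        · rintro _ ⟨w, rfl⟩ g
          apply Subtype.ext
          show of k G g • (NN k G • (w : V)) = NN k G • (w : V)
          rw [← mul_smul, of_mul_NN]
        · intro w hw
          have hfixV : ∀ g : G, of k G g • (w : V) = (w : V) := by
            intro g
            exact congrArg Subtype.val (hw g)
          have : (w : V) ∈ Set.range (fun v : V => NN k G • v) := by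
            rw [hyp]; exact hfixV
          obtain ⟨u, hu⟩ := this
          have hu' : NN k G • u = (w : V) := hu
          have hπu : NN k G * π u = 0 := by
            have := congrArg π hu'
            rw [map_smul] at this
            have hw0 : π (w : V) = 0 := w.2
            rw [hw0] at this
            exact this
          set w₁ : V := u - π u • v with hw₁
          have hw₁K : w₁ ∈ K := by
            rw [hK, LinearMap.mem_ker, hw₁, map_sub, map_smul, hπv]
            show π u - π u * 1 = 0
            rw [mul_one, sub_self]
          refine ⟨⟨w₁, hw₁K⟩, ?_⟩
          apply Subtype.ext
          show NN k G • w₁ = (w : V)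
          rw [hw₁, smul_sub, ← mul_smul, hπu, zero_smul, sub_zero, hu']
      haveI hKfree : Module.Free (MonoidAlgebra k G) ↥K :=
        ih (Module.finrank k ↥K) hKlt ↥K rfl hypK
      exact Module.Free.of_equiv' inferInstance e.symm
end Converse

end FreeTraceAux

/-- A finite-dimensional `kG`-module `V` (`char k = p`, `G` a finite `p`-group)
is free iff the image of the transfer map `v ↦ (Σ_{g∈G} g) • v` equals the fixed-point
subspace `V^G`. -/
theorem free_iff_trace_surjective
    {p : ℕ} [Fact p.Prime] (k : Type*) [Field k] [CharP k p]
    (G : Type*) [Group G] [Fintype G] (hG : IsPGroup p G)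
    (V : Type*) [AddCommGroup V] [Module k V] [Module (MonoidAlgebra k G) V]
    [IsScalarTower k (MonoidAlgebra k G) V] [FiniteDimensional k V] :
    Module.Free (MonoidAlgebra k G) V ↔
      (Set.range (fun v : V => ((∑ g : G, MonoidAlgebra.of k G g) : MonoidAlgebra k G) • v)
        = {x : V | ∀ g : G, MonoidAlgebra.of k G g • x = x}) := by
  constructor
  · intro hfree
    exact FreeTraceAux.forward
  · intro h
    exact FreeTraceAux.converse hG (Module.finrank k V) V rfl h
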